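/- The pinwheel angle φ = arctan(1/2) is an irrational multiple of π; that is, there are no nonzero integers m, n with m·φ = n·π. -/

import Mathlib

open Real Complex

private def zg : GaussianInt := ⟨2, 1⟩

private lemma key (k : ℕ) : ¬ (5:ℤ) ∣ ((zg^k).re + 2*(zg^k).im) := by
  induction k with
  | zero => simp [zg]
  | succ k ih =>
    have h1 : (zg^(k+1)).re = 2*(zg^k).re - (zg^k).im := by
      simp [pow_succ, Zsqrtd.re_mul, zg]; ring
    have h2 : (zg^(k+1)).im = (zg^k).re + 2*(zg^k).im := by
      simp [pow_succ, Zsqrtd.im_mul, zg]; ring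
    rw [h1, h2]
    omega

private lemma aux (k : ℕ) (hk : k ≠ 0) (n : ℤ)
    (h : (k : ℝ) * Real.arctan (1 / 2) = (n : ℝ) * Real.pi) : False := by
  set θ := Real.arctan (1/2) with hθ
  have hs5 : Real.sqrt (1 + (1/2:ℝ)^2) = Real.sqrt 5 / 2 := by
    rw [show (1:ℝ) + (1/2)^2 = 5/4 by norm_num,
      show (5:ℝ)/4 = 5/2^2 by norm_num, Real.sqrt_div' 5 (by norm_num),
      Real.sqrt_sq (by norm_num : (0:ℝ) ≤ 2)]
  have h5pos : (0:ℝ) < Real.sqrt 5 := Real.sqrt_pos.2 (by norm_num)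
  have hc : Real.cos θ = 2 / Real.sqrt 5 := by
    rw [hθ, Real.cos_arctan, hs5]; field_simp
  have hsin : Real.sin θ = 1 / Real.sqrt 5 := by
    rw [hθ, Real.sin_arctan, hs5]; field_simp
  have hz : ((zg : ℂ)) = (Real.sqrt 5 : ℂ) * Complex.exp (θ * I) := by
    rw [Complex.exp_mul_I]
    apply Complex.ext
    · simp only [zg, GaussianInt.toComplex_def, Complex.add_re, Complex.mul_re,
        Complex.ofReal_re, Complex.ofReal_im, Complex.add_im, Complex.mul_im,
        Complex.I_re, Complex.I_im, Complex.cos_ofReal_re, Complex.cos_ofReal_im,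
        Complex.sin_ofReal_re, Complex.sin_ofReal_im, hc, hsin]
      push_cast
      field_simp
      simp only [Complex.re_ofNat, Complex.im_ofNat, Complex.one_re, Complex.one_im]; ring
    · simp only [zg, GaussianInt.toComplex_def, Complex.add_re, Complex.mul_re,
        Complex.ofReal_re, Complex.ofReal_im, Complex.add_im, Complex.mul_im,
        Complex.I_re, Complex.I_im, Complex.cos_ofReal_re, Complex.cos_ofReal_im,
        Complex.sin_ofReal_re, Complex.sin_ofReal_im, hc, hsin]
      push_cast
      field_simp
      simp only [Complex.re_ofNat, Complex.im_ofNat, Complex.one_re, Complex.one_im]; ring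
  have hpow : ((zg^k : GaussianInt) : ℂ) = (Real.sqrt 5 : ℂ)^k * Complex.exp ((k*θ : ℝ) * I) := by
    rw [map_pow, hz, mul_pow, ← Complex.exp_nat_mul]
    push_cast
    ring_nf
  have him : (((zg^k).im : ℝ)) = (Real.sqrt 5)^k * Real.sin (k*θ) := by
    have h' := congrArg Complex.im hpow
    rw [show (GaussianInt.toComplex (zg^k)).im = (((zg^k).im : ℤ) : ℝ) from
        (GaussianInt.intCast_im _).symm] at h'
    rwa [Complex.mul_im, Complex.exp_ofReal_mul_I_re,
      Complex.exp_ofReal_mul_I_im, ← Complex.ofReal_pow, Complex.ofReal_re,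
      Complex.ofReal_im, zero_mul, add_zero] at h'
  have hsin0 : Real.sin ((k:ℝ)*θ) = 0 := by rw [h]; exact Real.sin_int_mul_pi n
  have him0 : (zg^k).im = 0 := by
    have : (((zg^k).im : ℝ)) = 0 := by rw [him, hsin0, mul_zero]
    exact_mod_cast this
  obtain ⟨j, rfl⟩ : ∃ j, k = j + 1 := ⟨k - 1, by omega⟩
  have h2 : (zg^(j+1)).im = (zg^j).re + 2*(zg^j).im := by
    simp [pow_succ, Zsqrtd.im_mul, zg]; ring
  exact key j (by rw [← h2, him0]; exact ⟨0, by ring⟩)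

/-- The pinwheel angle `φ = arctan(1/2)` is an irrational multiple of `π`:
there are no nonzero integers `m, n` with `m·φ = n·π`. -/
theorem pinwheel_angle_irrational :
    ¬ ∃ m n : ℤ, m ≠ 0 ∧ n ≠ 0 ∧ (m : ℝ) * Real.arctan (1 / 2) = (n : ℝ) * Real.pi := by
  rintro ⟨m, n, hm, hn, h⟩
  rcases lt_or_gt_of_ne hm with hneg | hpos
  · refine aux (-m).toNat (by omega) (-n) ?_
    have : ((-m).toNat : ℝ) = ((-m : ℤ) : ℝ) := by
      exact_mod_cast congrArg (Int.cast : ℤ → ℝ) (Int.toNat_of_nonneg (by omega))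
    rw [this]; push_cast; nlinarith [h]
  · refine aux m.toNat (by omega) n ?_
    have : (m.toNat : ℝ) = ((m : ℤ) : ℝ) := by
      exact_mod_cast congrArg (Int.cast : ℤ → ℝ) (Int.toNat_of_nonneg (by omega))
    rw [this]; exact h
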